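/- Let G₀ be the empty graph on n vertices (n = 2m even), and form G_ℓ by taking the union of ℓ independent uniformly random perfect matchings of [n] as edge sets. Then for ℓ = 5(1+c) log n with c > 0 and n sufficiently large, Pr[G_ℓ is disconnected] ≤ 2 n^{-c}. -/

import Mathlib

open MeasureTheory
open scoped ENNReal
set_option maxHeartbeats 1000000

/-- A perfect matching of `Fin n`, encoded as a fixed-point-free involution. -/
def PerfectMatching (n : ℕ) : Type :=
  {σ : Equiv.Perm (Fin n) // (∀ i, σ (σ i) = i) ∧ ∀ i, σ i ≠ i}

instance (n : ℕ) : Fintype (PerfectMatching n) := by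
  unfold PerfectMatching; infer_instance

instance (n : ℕ) : MeasurableSpace (PerfectMatching n) := ⊤

/-- The uniform distribution on perfect matchings of `Fin n`. -/
noncomputable def uniformPM (n : ℕ) (h : Nonempty (PerfectMatching n)) :
    Measure (PerfectMatching n) :=
  (@PMF.uniformOfFintype (PerfectMatching n) _ h).toMeasure

/-- The graph `G_ℓ` on `[n]` whose edge set is the union of the `ℓ` perfect matchings `M`. -/
def matchingUnionGraph (n ℓ : ℕ) (M : Fin ℓ → PerfectMatching n) : SimpleGraph (Fin n) :=
  SimpleGraph.fromRel (fun i j => ∃ t, (M t).1 i = j)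

section GPMaux

def GPM (α : Type*) [Fintype α] [DecidableEq α] : Type _ :=
  {σ : Equiv.Perm α // (∀ i, σ (σ i) = i) ∧ ∀ i, σ i ≠ i}

instance (α : Type*) [Fintype α] [DecidableEq α] : Fintype (GPM α) := by
  unfold GPM; infer_instance

def pmEquivGPM (n : ℕ) : PerfectMatching n ≃ GPM (Fin n) where
  toFun σ := ⟨σ.1, σ.2⟩
  invFun σ := ⟨σ.1, σ.2⟩
  left_inv _ := rfl
  right_inv _ := rfl

def pmCount (k : ℕ) : ℕ := Fintype.card (GPM (Fin k))


set_option linter.unusedSectionVars false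

section Congr
open Finset Equiv
variable {α : Type*} [Fintype α] [DecidableEq α]

def GPM.congr {α β : Type*} [Fintype α] [DecidableEq α] [Fintype β] [DecidableEq β]
    (e : α ≃ β) : GPM α ≃ GPM β :=
  Equiv.subtypeEquiv e.permCongr (by
    intro σ
    constructor
    · rintro ⟨h1, h2⟩
      refine ⟨fun i => ?_, fun i => ?_⟩
      · simp [Equiv.permCongr_apply, h1]
      · simp only [Equiv.permCongr_apply, ne_eq]
        intro hc
        exact h2 _ (by simpa using congrArg e.symm hc)
    · rintro ⟨h1, h2⟩
      refine ⟨fun i => ?_, fun i => ?_⟩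
      · have := h1 (e i)
        simpa using this
      · have := h2 (e i)
        simp only [Equiv.permCongr_apply, Equiv.symm_apply_apply, ne_eq] at this
        intro hc
        exact this (by rw [hc]))

lemma card_GPM (α : Type*) [Fintype α] [DecidableEq α] :
    Fintype.card (GPM α) = pmCount (Fintype.card α) :=
  Fintype.card_congr (GPM.congr (Fintype.equivFin α))


namespace GPMfiber

variable (a b : α) (hab : b ≠ a)

abbrev p (x : α) : Prop := x ≠ a ∧ x ≠ b

lemma not_p_a : ¬ p a b a := by simp [p]
lemma not_p_b : ¬ p a b b := by simp [p]

def κ : Equiv.Perm {x : α // ¬ p a b x} :=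
  Equiv.swap ⟨a, not_p_a a b⟩ ⟨b, not_p_b a b⟩

lemma κ_a : ((κ a b) ⟨a, not_p_a a b⟩ : {x : α // ¬ p a b x}).1 = b := by
  simp [κ, Equiv.swap_apply_left]

lemma κ_b : ((κ a b) ⟨b, not_p_b a b⟩ : {x : α // ¬ p a b x}).1 = a := by
  simp [κ, Equiv.swap_apply_right]

lemma κ_ne (hba : b ≠ a) (y : {x : α // ¬ p a b x}) : ((κ a b) y).1 ≠ y.1 := by
  have hy : y.1 = a ∨ y.1 = b := by
    have := y.2; simp [p] at this; tauto
  rcases hy with hy | hy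
  · have : y = ⟨a, not_p_a a b⟩ := Subtype.ext hy
    rw [this, κ_a]; simpa [hy] using hba
  · have : y = ⟨b, not_p_b a b⟩ := Subtype.ext hy
    rw [this, κ_b]; simpa [hy] using Ne.symm hba

variable {a b}

lemma invariant {σ : Equiv.Perm α} (hinv : ∀ i, σ (σ i) = i) (hσ : σ a = b) :
    ∀ x, p a b x ↔ p a b (σ x) := by
  intro x
  constructor
  · rintro ⟨h1, h2⟩
    constructor
    · intro hc
      exact h2 (by rw [← hσ, ← hc, hinv])
    · intro hc
      exact h1 (by rw [← hσ] at hc; have := congrArg σ hc; rwa [hinv, hinv] at this)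
  · rintro ⟨h1, h2⟩
    constructor
    · intro hc; rw [hc, hσ] at h2; exact h2 rfl
    · intro hc; rw [hc, ← hσ] at h1; exact h1 (hinv a)

/-- The fiber equivalence: matchings sending `a` to `b` correspond to matchings of the rest. -/
def fiberEquiv (hba : b ≠ a) :
    {σ : GPM α // σ.1 a = b} ≃ GPM {x : α // p a b x} where
  toFun σ := ⟨σ.1.1.subtypePerm (fun x => (invariant σ.1.2.1 σ.2 x).symm), by
    constructor
    · intro i; exact Subtype.ext (σ.1.2.1 i.1)
    · intro i hc; exact σ.1.2.2 i.1 (congrArg Subtype.val hc)⟩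
  invFun τ := ⟨⟨Equiv.Perm.subtypeCongr τ.1 (κ a b), by
      constructor
      · intro x
        by_cases hx : p a b x
        · rw [Equiv.Perm.subtypeCongr.left_apply _ _ hx]
          rw [Equiv.Perm.subtypeCongr.left_apply _ _ (τ.1 ⟨x, hx⟩).2]
          have := τ.2.1 ⟨x, hx⟩
          rw [Subtype.eta] at *
          exact congrArg Subtype.val this
        · rw [Equiv.Perm.subtypeCongr.right_apply _ _ hx]
          rw [Equiv.Perm.subtypeCongr.right_apply _ _ ((κ a b) ⟨x, hx⟩).2]
          rw [Subtype.eta]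
          show (((κ a b) ((κ a b) ⟨x, hx⟩)) : {x : α // ¬ p a b x}).1 = x
          rw [κ, Equiv.swap_apply_self]
      · intro x
        by_cases hx : p a b x
        · rw [Equiv.Perm.subtypeCongr.left_apply _ _ hx]
          intro hc
          exact τ.2.2 ⟨x, hx⟩ (Subtype.ext hc)
        · rw [Equiv.Perm.subtypeCongr.right_apply _ _ hx]
          exact κ_ne a b hba ⟨x, hx⟩⟩, by
      rw [Equiv.Perm.subtypeCongr.right_apply _ _ (not_p_a a b)]
      exact κ_a a b⟩
  left_inv := by
    rintro ⟨⟨σ, hσ⟩, ha⟩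
    refine Subtype.ext (Subtype.ext (Equiv.ext fun x => ?_))
    by_cases hx : p a b x
    · rw [Equiv.Perm.subtypeCongr.left_apply _ _ hx]; rfl
    · rw [Equiv.Perm.subtypeCongr.right_apply _ _ hx]
      have hy : x = a ∨ x = b := by simp [p] at hx; tauto
      rcases hy with rfl | rfl
      · exact (κ_a x b).trans ha.symm
      · have hxa : σ x = a := by
          have h2 := congrArg σ ha
          rw [hσ.1] at h2
          exact h2.symm
        exact (κ_b a x).trans hxa.symm
  right_inv := by
    rintro ⟨τ, hτ⟩
    refine Subtype.ext (Equiv.ext fun y => ?_)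
    refine Subtype.ext ?_
    show (Equiv.Perm.subtypeCongr τ (κ a b)) y.1 = (τ y).1
    rw [Equiv.Perm.subtypeCongr.left_apply _ _ y.2, Subtype.eta]

end GPMfiber


def fiberEquivAx {α : Type*} [Fintype α] [DecidableEq α] {a b : α} (hba : b ≠ a) :
    {σ : GPM α // σ.1 a = b} ≃ GPM {x : α // x ≠ a ∧ x ≠ b} :=
  GPMfiber.fiberEquiv hba hba

lemma pmCount_zero : pmCount 0 = 1 := by decide

lemma pmCount_one : pmCount 1 = 0 := by decide

lemma pmCount_succ_succ (k : ℕ) : pmCount (k + 2) = (k + 1) * pmCount k := by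
  classical
  set α := Fin (k + 2) with hα
  let a : α := 0
  have hmaps : ∀ σ : GPM α, σ ∈ (univ : Finset (GPM α)) → σ.1 a ∈ univ.erase a := by
    intro σ _
    exact mem_erase.2 ⟨σ.2.2 a, mem_univ _⟩
  have hsum := Finset.card_eq_sum_card_fiberwise hmaps
  have hfiber : ∀ b ∈ univ.erase a,
      (univ.filter (fun σ : GPM α => σ.1 a = b)).card = pmCount k := by
    intro b hb
    have hba : b ≠ a := (mem_erase.1 hb).1
    have h1 : (univ.filter (fun σ : GPM α => σ.1 a = b)).card
        = Fintype.card {σ : GPM α // σ.1 a = b} := (Fintype.card_subtype _).symm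
    rw [h1, Fintype.card_congr (fiberEquivAx hba), card_GPM]
    congr 1
    have h2 : (univ.filter (fun x : α => x ≠ a ∧ x ≠ b)) = (univ.erase a).erase b := by
      ext x; simp [and_comm]
    rw [Fintype.card_subtype, h2, card_erase_of_mem (mem_erase.2 ⟨hba, mem_univ _⟩),
      card_erase_of_mem (mem_univ _)]
    simp [hα]
  have : pmCount (k + 2) = ∑ b ∈ univ.erase a, pmCount k := by
    rw [pmCount, ← Finset.card_univ, hsum]
    exact Finset.sum_congr rfl hfiber
  rw [this, Finset.sum_const, smul_eq_mul]
  congr 1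
  rw [Finset.card_erase_of_mem (mem_univ _)]
  simp [hα]

lemma pmCount_prod (k h : ℕ) :
    pmCount (k + 2 * h) = (∏ j ∈ range h, (k + 2 * j + 1)) * pmCount k := by
  induction h with
  | zero => simp
  | succ h ih =>
    have : k + 2 * (h + 1) = (k + 2 * h) + 2 := by ring
    rw [this, pmCount_succ_succ, ih, prod_range_succ]
    ring

lemma pmCount_odd (h : ℕ) : pmCount (2 * h + 1) = 0 := by
  have := pmCount_prod 1 h
  rw [pmCount_one, mul_zero] at this
  rw [← this]
  congr 1
  ring

lemma pmCount_key {n i e : ℕ} (hie : i = 2 * e) (h2 : 2 ≤ i) (hn : 2 * i ≤ n) :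
    2 ^ e * (pmCount i * pmCount (n - i)) ≤ pmCount n := by
  set r := n - i with hr
  have hin : i ≤ n := le_trans (by omega) hn
  have hnr : n = r + 2 * e := by omega
  have hir : i ≤ r := by omega
  have hpn : pmCount n = (∏ j ∈ range e, (r + 2 * j + 1)) * pmCount r := by
    rw [hnr, pmCount_prod]
  have hpi : pmCount i = ∏ j ∈ range e, (2 * j + 1) := by
    have := pmCount_prod 0 e
    simp only [Nat.zero_add, pmCount_zero, mul_one] at this
    rw [hie, this]
  have hprod : 2 ^ e * pmCount i ≤ ∏ j ∈ range e, (r + 2 * j + 1) := by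
    rw [hpi, Finset.pow_eq_prod_const, ← Finset.prod_mul_distrib]
    refine Finset.prod_le_prod' fun j hj => ?_
    have hj' : j < e := Finset.mem_range.1 hj
    omega
  calc 2 ^ e * (pmCount i * pmCount r) = (2 ^ e * pmCount i) * pmCount r := by ring
    _ ≤ (∏ j ∈ range e, (r + 2 * j + 1)) * pmCount r := Nat.mul_le_mul_right _ hprod
    _ = pmCount n := hpn.symm



lemma inv_iff {σ : Equiv.Perm α} (hinv : ∀ i, σ (σ i) = i) {S : Finset α}
    (hS : ∀ x ∈ S, σ x ∈ S) : ∀ x, x ∈ S ↔ σ x ∈ S := by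
  intro x
  refine ⟨fun hx => hS x hx, fun hx => ?_⟩
  have := hS _ hx
  rwa [hinv] at this

lemma inv_iff_not {σ : Equiv.Perm α} (hinv : ∀ i, σ (σ i) = i) {S : Finset α}
    (hS : ∀ x ∈ S, σ x ∈ S) : ∀ x, x ∉ S ↔ σ x ∉ S := fun x =>
  not_congr (inv_iff hinv hS x)

/-- matchings preserving `S` decompose as a matching of `S` and one of `Sᶜ`. -/
def isoEquiv (S : Finset α) :
    {σ : GPM α // ∀ x ∈ S, σ.1 x ∈ S} ≃ GPM {x : α // x ∈ S} × GPM {x : α // x ∉ S} where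
  toFun σ :=
    (⟨σ.1.1.subtypePerm (fun x => (inv_iff σ.1.2.1 σ.2 x).symm), fun i => Subtype.ext (σ.1.2.1 i.1),
        fun i hc => σ.1.2.2 i.1 (congrArg Subtype.val hc)⟩,
     ⟨σ.1.1.subtypePerm (fun x => (inv_iff_not σ.1.2.1 σ.2 x).symm), fun i => Subtype.ext (σ.1.2.1 i.1),
        fun i hc => σ.1.2.2 i.1 (congrArg Subtype.val hc)⟩)
  invFun τρ := by
    refine ⟨⟨Equiv.Perm.subtypeCongr τρ.1.1 τρ.2.1, ?_, ?_⟩, ?_⟩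
    · intro x
      by_cases hx : x ∈ S
      · rw [Equiv.Perm.subtypeCongr.left_apply _ _ hx,
          Equiv.Perm.subtypeCongr.left_apply _ _ (τρ.1.1 ⟨x, hx⟩).2, Subtype.eta]
        exact congrArg Subtype.val (τρ.1.2.1 ⟨x, hx⟩)
      · rw [Equiv.Perm.subtypeCongr.right_apply _ _ hx,
          Equiv.Perm.subtypeCongr.right_apply _ _ (τρ.2.1 ⟨x, hx⟩).2, Subtype.eta]
        exact congrArg Subtype.val (τρ.2.2.1 ⟨x, hx⟩)
    · intro x
      by_cases hx : x ∈ S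
      · rw [Equiv.Perm.subtypeCongr.left_apply _ _ hx]
        exact fun hc => τρ.1.2.2 ⟨x, hx⟩ (Subtype.ext hc)
      · rw [Equiv.Perm.subtypeCongr.right_apply _ _ hx]
        exact fun hc => τρ.2.2.2 ⟨x, hx⟩ (Subtype.ext hc)
    · intro x hx
      rw [Equiv.Perm.subtypeCongr.left_apply _ _ hx]
      exact (τρ.1.1 ⟨x, hx⟩).2
  left_inv := by
    rintro ⟨⟨σ, hσ⟩, hpres⟩
    refine Subtype.ext (Subtype.ext (Equiv.ext fun x => ?_))
    by_cases hx : x ∈ S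
    · rw [Equiv.Perm.subtypeCongr.left_apply _ _ hx]; rfl
    · rw [Equiv.Perm.subtypeCongr.right_apply _ _ hx]; rfl
  right_inv := by
    rintro ⟨τ, ρ⟩
    refine Prod.ext (Subtype.ext (Equiv.ext fun y => Subtype.ext ?_))
      (Subtype.ext (Equiv.ext fun y => Subtype.ext ?_))
    · show (Equiv.Perm.subtypeCongr τ.1 ρ.1) y.1 = (τ.1 y).1
      rw [Equiv.Perm.subtypeCongr.left_apply _ _ y.2, Subtype.eta]
    · show (Equiv.Perm.subtypeCongr τ.1 ρ.1) y.1 = (ρ.1 y).1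
      rw [Equiv.Perm.subtypeCongr.right_apply _ _ y.2, Subtype.eta]

lemma card_iso (S : Finset α) :
    Fintype.card {σ : GPM α // ∀ x ∈ S, σ.1 x ∈ S}
      = Fintype.card (GPM {x : α // x ∈ S}) * Fintype.card (GPM {x : α // x ∉ S}) := by
  rw [Fintype.card_congr (isoEquiv S), Fintype.card_prod]


end Congr

open Finset in
lemma exists_isolated {n ℓ : ℕ} (hn : 1 ≤ n) (M : Fin ℓ → PerfectMatching n)
    (hdisc : ¬ (matchingUnionGraph n ℓ M).Connected) :
    ∃ S : Finset (Fin n), S.Nonempty ∧ 2 * S.card ≤ n ∧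
      ∀ t, ∀ x ∈ S, (M t).1 x ∈ S := by
  classical
  set G := matchingUnionGraph n ℓ M with hG
  have hne : Nonempty (Fin n) := ⟨⟨0, hn⟩⟩
  rw [SimpleGraph.connected_iff] at hdisc
  push_neg at hdisc
  have hpre : ¬ G.Preconnected := fun hp => not_isEmpty_iff.2 hne (hdisc hp)
  simp only [SimpleGraph.Preconnected] at hpre
  push_neg at hpre
  obtain ⟨u, v, huv⟩ := hpre
  set S₀ : Finset (Fin n) := univ.filter (fun x => G.Reachable u x) with hS₀
  have hu : u ∈ S₀ := mem_filter.2 ⟨mem_univ _, SimpleGraph.Reachable.refl u⟩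
  have hv : v ∉ S₀ := by simp [hS₀, huv]
  have hclose : ∀ t, ∀ x ∈ S₀, (M t).1 x ∈ S₀ := by
    intro t x hx
    simp only [hS₀, mem_filter, mem_univ, true_and] at hx ⊢
    refine hx.trans (SimpleGraph.Adj.reachable ?_)
    rw [hG, matchingUnionGraph, SimpleGraph.fromRel_adj]
    exact ⟨Ne.symm ((M t).2.2 x), Or.inl ⟨t, rfl⟩⟩
  have hcloseC : ∀ t, ∀ x ∈ S₀ᶜ, (M t).1 x ∈ S₀ᶜ := by
    intro t x hx
    rw [mem_compl] at hx ⊢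
    intro hc
    have := hclose t _ hc
    rw [(M t).2.1] at this
    exact hx this
  have hcard : S₀.card + S₀ᶜ.card = n := by
    have h1 : S₀.card ≤ n := by
      have := card_le_univ S₀
      simpa [Finset.card_univ] using this
    rw [Finset.card_compl, Fintype.card_fin]
    omega
  by_cases hle : 2 * S₀.card ≤ n
  · exact ⟨S₀, ⟨u, hu⟩, hle, hclose⟩
  · refine ⟨S₀ᶜ, ⟨v, mem_compl.2 hv⟩, by omega, hcloseC⟩


lemma card_iso' {α : Type*} [Fintype α] [DecidableEq α] (S : Finset α) :
    Nat.card {σ : GPM α // ∀ x ∈ S, σ.1 x ∈ S}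
      = pmCount S.card * pmCount (Fintype.card α - S.card) := by
  rw [Nat.card_eq_fintype_card, card_iso S, card_GPM, card_GPM, Fintype.card_coe,
    Fintype.card_subtype_compl, Fintype.card_coe]

lemma natCard_PM (n : ℕ) : Nat.card (PerfectMatching n) = pmCount n := by
  have h1 : Nat.card (PerfectMatching n) = Nat.card (GPM (Fin n)) :=
    Nat.card_congr (pmEquivGPM n)
  rw [h1, Nat.card_eq_fintype_card]
  rfl

end GPMaux


theorem matchingUnionGraph_disconnected_prob :
    ∀ c : ℝ, 0 < c → ∃ N : ℕ, ∀ n : ℕ, N ≤ n → ∀ m : ℕ, n = 2 * m →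
    ∀ h : Nonempty (PerfectMatching n),
    ((Measure.pi fun _ : Fin ⌈5 * (1 + c) * Real.log n⌉₊ => uniformPM n h)
        {M | ¬ (matchingUnionGraph n ⌈5 * (1 + c) * Real.log n⌉₊ M).Connected}).toReal
      ≤ 2 * (n : ℝ) ^ (-c) := by
  intro c hc
  refine ⟨2, fun n hn m hm h => ?_⟩
  classical
  haveI := h
  set ℓ := ⌈5 * (1 + c) * Real.log n⌉₊ with hℓdef
  have hn1 : (1:ℕ) ≤ n := by omega
  have hn2 : (2:ℝ) ≤ (n:ℝ) := by exact_mod_cast hn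
  have hn0 : (0:ℝ) < (n:ℝ) := by linarith
  have hlogn : 0 ≤ Real.log n := Real.log_nonneg (by linarith)
  have hlog2 : (0.6931471803 : ℝ) < Real.log 2 := Real.log_two_gt_d9
  have hℓreal : 5 * (1 + c) * Real.log n ≤ (ℓ : ℝ) := Nat.le_ceil _
  have hℓ1 : 1 ≤ ℓ := by
    have hpos : (0:ℝ) < 5 * (1 + c) * Real.log n := by
      have : 0 < Real.log n := Real.log_pos (by linarith)
      positivity
    have := Nat.ceil_pos.2 hpos
    omega
  set μ0 := uniformPM n h with hμ0
  haveI hpm0 : IsProbabilityMeasure μ0 := by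
    rw [hμ0]; unfold uniformPM; infer_instance
  set μ := Measure.pi (fun _ : Fin ℓ => μ0) with hμ
  haveI hpm : IsProbabilityMeasure μ := by rw [hμ]; infer_instance
  set B : Finset (Fin n) → Set (PerfectMatching n) :=
    fun S => {σ | ∀ x ∈ S, σ.1 x ∈ S} with hB
  set A : Finset (Fin n) → Set (Fin ℓ → PerfectMatching n) :=
    fun S => Set.univ.pi (fun _ => B S) with hA
  set 𝒮 : Finset (Finset (Fin n)) :=
    Finset.univ.filter (fun S => S.Nonempty ∧ 2 * S.card ≤ n) with h𝒮
  -- cardinality facts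
  have hPMpos : 0 < Nat.card (PerfectMatching n) := Nat.card_pos
  have hcardPM : Nat.card (PerfectMatching n) = pmCount n := natCard_PM n
  have hcardB : ∀ S : Finset (Fin n),
      Nat.card (B S) = pmCount S.card * pmCount (n - S.card) := by
    intro S
    have e1 : ↥(B S) ≃ {σ : GPM (Fin n) // ∀ x ∈ S, σ.1 x ∈ S} :=
      (pmEquivGPM n).subtypeEquiv (fun σ => Iff.rfl)
    rw [Nat.card_congr e1, card_iso' S, Fintype.card_fin]
  -- union bound
  have hsub : {M : Fin ℓ → PerfectMatching n | ¬ (matchingUnionGraph n ℓ M).Connected}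
      ⊆ ⋃ S ∈ 𝒮, A S := by
    intro M hM
    obtain ⟨S, hS1, hS2, hS3⟩ := exists_isolated hn1 M hM
    refine Set.mem_iUnion₂.2 ⟨S, ?_, ?_⟩
    · rw [h𝒮, Finset.mem_filter]
      exact ⟨Finset.mem_univ _, hS1, hS2⟩
    · exact Set.mem_univ_pi.2 fun t => hS3 t
  have hub : μ {M : Fin ℓ → PerfectMatching n | ¬ (matchingUnionGraph n ℓ M).Connected}
      ≤ ∑ S ∈ 𝒮, μ (A S) :=
    le_trans (measure_mono hsub) (measure_biUnion_finset_le _ _)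
  have hAS : ∀ S, μ (A S) = μ0 (B S) ^ ℓ := by
    intro S
    rw [hμ, hA]
    rw [Measure.pi_pi]
    simp
  have hμ0B : ∀ S, μ0 (B S)
      = (Nat.card (B S) : ℝ≥0∞) / (Nat.card (PerfectMatching n) : ℝ≥0∞) := by
    intro S
    have base := PMF.toMeasure_uniformOfFintype_apply (α := PerfectMatching n) (B S)
      MeasurableSpace.measurableSet_top
    simp only [← Nat.card_eq_fintype_card] at base
    rw [hμ0]
    unfold uniformPM
    exact base
  have htoReal : ∀ S, (μ (A S)).toReal
      = ((Nat.card (B S) : ℝ) / (Nat.card (PerfectMatching n) : ℝ)) ^ ℓ := by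
    intro S
    rw [hAS, hμ0B, ENNReal.toReal_pow, ENNReal.toReal_div]
    simp
  -- the weight function
  set w : ℝ := (2 : ℝ) ^ (-(ℓ:ℝ)/2) with hw
  have hw0 : 0 < w := Real.rpow_pos_of_pos (by norm_num) _
  set v : ℕ → ℝ := fun i => if 2 ≤ i then w ^ i else 0 with hv
  have hv0 : ∀ i, 0 ≤ v i := by
    intro i; rw [hv]; dsimp only; split_ifs
    · positivity
    · exact le_refl 0
  have hPMr : (0:ℝ) < (Nat.card (PerfectMatching n) : ℝ) := by exact_mod_cast hPMpos
  have hperS : ∀ S ∈ 𝒮, (μ (A S)).toReal ≤ v S.card := by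
    intro S hS
    rw [h𝒮, Finset.mem_filter] at hS
    obtain ⟨-, hSne, hScard⟩ := hS
    have hi1 : 1 ≤ S.card := Finset.card_pos.2 hSne
    rw [htoReal]
    rcases Nat.even_or_odd S.card with he | ho
    · obtain ⟨e, he⟩ := he
      have hie : S.card = 2 * e := by omega
      have h2 : 2 ≤ S.card := by omega
      have key := pmCount_key hie h2 hScard
      rw [mul_comm] at key
      have hxle : (Nat.card (B S) : ℝ)
          ≤ ((2:ℝ)^e)⁻¹ * (Nat.card (PerfectMatching n) : ℝ) := by
        rw [inv_mul_eq_div, le_div_iff₀ (by positivity)]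
        rw [hcardB, hcardPM]
        exact_mod_cast key
      have hxle' : (Nat.card (B S) : ℝ) / (Nat.card (PerfectMatching n) : ℝ)
          ≤ ((2:ℝ)^e)⁻¹ := by
        rw [div_le_iff₀ hPMr]
        exact hxle
      have hpow : (((2:ℝ)^e)⁻¹) ^ ℓ = w ^ S.card := by
        rw [hie, hw]
        rw [← Real.rpow_natCast (2:ℝ) e, ← Real.rpow_neg (by norm_num),
          ← Real.rpow_natCast ((2:ℝ)^(-(e:ℝ))) ℓ, ← Real.rpow_mul (by norm_num),
          ← Real.rpow_natCast ((2:ℝ)^(-(ℓ:ℝ)/2)) (2*e), ← Real.rpow_mul (by norm_num)]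
        congr 1
        push_cast
        ring
      have hvS : v S.card = w ^ S.card := by rw [hv]; exact if_pos h2
      rw [hvS, ← hpow]
      refine pow_le_pow_left₀ ?_ hxle' ℓ
      positivity
    · obtain ⟨k, hk⟩ := ho
      have hzero : Nat.card (B S) = 0 := by
        rw [hcardB, hk, pmCount_odd, zero_mul]
      rw [hzero]
      simp only [Nat.cast_zero, zero_div]
      rw [zero_pow (by omega : ℓ ≠ 0)]
      exact hv0 _
  -- summing
  have hsum1 : ∑ S ∈ 𝒮, v S.card ≤ ∑ S : Finset (Fin n), v S.card := by
    rw [h𝒮]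
    exact Finset.sum_le_sum_of_subset_of_nonneg (Finset.filter_subset _ _)
      (fun S _ _ => hv0 S.card)
  have hsum2 : ∑ S : Finset (Fin n), v S.card
      = ∑ j ∈ Finset.range (n+1), (n.choose j : ℝ) * v j := by
    rw [← Finset.powerset_univ, Finset.sum_powerset]
    rw [Finset.card_univ, Fintype.card_fin]
    refine Finset.sum_congr rfl fun j hj => ?_
    rw [Finset.sum_powersetCard]
    rw [Finset.card_univ, Fintype.card_fin, nsmul_eq_mul]
  have hlog2' : (0:ℝ) < Real.log 2 := by linarith
  have hℓln : Real.log n ≤ ((ℓ:ℝ)/2) * Real.log 2 := by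
    nlinarith [mul_le_mul_of_nonneg_right hℓreal hlog2'.le,
      mul_le_mul_of_nonneg_left hlog2.le hlogn,
      mul_nonneg (mul_nonneg hc.le hlogn) hlog2'.le]
  have hnw : (n:ℝ) * w ≤ 1 := by
    have hp : (0:ℝ) < (2:ℝ) ^ ((ℓ:ℝ)/2) := Real.rpow_pos_of_pos (by norm_num) _
    have h2 : (n:ℝ) ≤ (2:ℝ) ^ ((ℓ:ℝ)/2) := by
      rw [Real.rpow_def_of_pos (by norm_num : (0:ℝ) < 2), ← Real.exp_log hn0,
        Real.exp_le_exp]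
      linarith
    have hwinv : w = ((2:ℝ)^((ℓ:ℝ)/2))⁻¹ := by
      rw [hw, neg_div, Real.rpow_neg (by norm_num)]
    calc (n:ℝ) * w ≤ ((2:ℝ) ^ ((ℓ:ℝ)/2)) * w := mul_le_mul_of_nonneg_right h2 hw0.le
      _ = 1 := by rw [hwinv, mul_inv_cancel₀ hp.ne']
  have hsum3 : ∑ j ∈ Finset.range (n+1), (n.choose j : ℝ) * v j
      ≤ ((n:ℝ)+1) * ((n:ℝ) * w)^2 := by
    have hbound : ∀ j ∈ Finset.range (n+1), (n.choose j : ℝ) * v j ≤ ((n:ℝ) * w)^2 := by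
      intro j hj
      rw [hv]; dsimp only
      split_ifs with h2j
      · calc (n.choose j : ℝ) * w^j ≤ (n:ℝ)^j * w^j := by
              refine mul_le_mul_of_nonneg_right ?_ (by positivity)
              exact_mod_cast Nat.choose_le_pow n j
          _ = ((n:ℝ)*w)^j := (mul_pow _ _ _).symm
          _ ≤ ((n:ℝ)*w)^2 := pow_le_pow_of_le_one (by positivity) hnw h2j
      · rw [mul_zero]; positivity
    calc ∑ j ∈ Finset.range (n+1), (n.choose j : ℝ) * v j
        ≤ (Finset.range (n+1)).card • (((n:ℝ) * w)^2) := Finset.sum_le_card_nsmul _ _ _ hbound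
      _ = ((n:ℝ)+1) * ((n:ℝ) * w)^2 := by
          rw [Finset.card_range, nsmul_eq_mul]; push_cast; ring
  have hkey : (n:ℝ)^(3:ℕ) * w^2 ≤ (n:ℝ) ^ (-c) := by
    have hw2 : w^2 = (2:ℝ) ^ (-(ℓ:ℝ)) := by
      rw [hw, ← Real.rpow_natCast ((2:ℝ)^(-(ℓ:ℝ)/2)) 2, ← Real.rpow_mul (by norm_num)]
      norm_num
    have hn3 : (n:ℝ)^(3:ℕ) = (n:ℝ) ^ ((3:ℕ):ℝ) := (Real.rpow_natCast _ 3).symm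
    rw [hw2, hn3]
    rw [Real.rpow_def_of_pos hn0, Real.rpow_def_of_pos (by norm_num : (0:ℝ) < 2),
      Real.rpow_def_of_pos hn0, ← Real.exp_add, Real.exp_le_exp]
    push_cast
    nlinarith [mul_le_mul_of_nonneg_right hℓreal hlog2'.le,
      mul_le_mul_of_nonneg_left hlog2.le hlogn,
      mul_le_mul_of_nonneg_left hlog2.le (mul_nonneg hc.le hlogn)]
  have hfinal : ((n:ℝ)+1) * ((n:ℝ) * w)^2 ≤ 2 * (n:ℝ) ^ (-c) := by
    have e1 : ((n:ℝ)+1) * ((n:ℝ)*w)^2 ≤ (2*(n:ℝ)) * ((n:ℝ)*w)^2 :=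
      mul_le_mul_of_nonneg_right (by linarith) (by positivity)
    have e2 : (2*(n:ℝ)) * ((n:ℝ)*w)^2 = 2 * ((n:ℝ)^(3:ℕ) * w^2) := by ring
    calc ((n:ℝ)+1) * ((n:ℝ)*w)^2 ≤ (2*(n:ℝ)) * ((n:ℝ)*w)^2 := e1
      _ = 2 * ((n:ℝ)^(3:ℕ) * w^2) := e2
      _ ≤ 2 * (n:ℝ) ^ (-c) := by linarith [hkey]
  -- put everything together
  have hne : ∀ S ∈ 𝒮, μ (A S) ≠ ⊤ := fun S _ => (measure_lt_top μ _).ne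
  calc (μ {M : Fin ℓ → PerfectMatching n | ¬ (matchingUnionGraph n ℓ M).Connected}).toReal
      ≤ (∑ S ∈ 𝒮, μ (A S)).toReal := by
        refine ENNReal.toReal_mono ?_ hub
        exact (ENNReal.sum_lt_top.2 (fun S hS => (hne S hS).lt_top)).ne
    _ = ∑ S ∈ 𝒮, (μ (A S)).toReal := ENNReal.toReal_sum hne
    _ ≤ ∑ S ∈ 𝒮, v S.card := Finset.sum_le_sum hperS
    _ ≤ ∑ S : Finset (Fin n), v S.card := hsum1
    _ = ∑ j ∈ Finset.range (n+1), (n.choose j : ℝ) * v j := hsum2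
    _ ≤ ((n:ℝ)+1) * ((n:ℝ) * w)^2 := hsum3
    _ ≤ 2 * (n:ℝ) ^ (-c) := hfinal
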